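/- Let A be an abelian category with enough projectives and F : A → B a right exact additive functor to an abelian category B. If the first left derived functor L¹F is left exact, then LⁱF = 0 for all i ≥ 2. -/

import Mathlib

open CategoryTheory CategoryTheory.Limits

universe v u v' u'

noncomputable section Statement3Aux

namespace Statement3Aux

variable {C : Type u} [Category.{v} C] [Abelian C] [EnoughProjectives C]

variable (X : C)

/-- The syzygy object: kernel of the chosen projective epi onto `X`. -/
abbrev syz : C := kernel (Projective.π X)

variable {X} (Q : ProjectiveResolution (syz X))

/-- The complex obtained by splicing a projective resolution of the syzygy of `X`
with `Projective.over X`. -/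
def extComplex : ChainComplex C ℕ :=
  ChainComplex.of
    (fun n => match n with
      | 0 => Projective.over X
      | n + 1 => Q.complex.X n)
    (fun n => match n with
      | 0 => Q.π.f 0 ≫ kernel.ι (Projective.π X)
      | n + 1 => Q.complex.d (n + 1) n)
    (fun n => match n with
      | 0 => by
          erw [← Category.assoc, ProjectiveResolution.complex_d_comp_π_f_zero, zero_comp]
      | n + 1 => Q.complex.d_comp_d _ _ _)

lemma extComplex_d_one_zero :
    (extComplex Q).d 1 0 = Q.π.f 0 ≫ kernel.ι (Projective.π X) :=
  by dsimp only [extComplex]; erw [ChainComplex.of_d]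

lemma extComplex_d_succ (n : ℕ) :
    (extComplex Q).d (n + 2) (n + 1) = Q.complex.d (n + 1) n :=
  by dsimp only [extComplex]; erw [ChainComplex.of_d]

instance (n : ℕ) : Projective ((extComplex Q).X n) := by
  cases n with
  | zero => exact (inferInstance : Projective (Projective.over X))
  | succ n => exact (inferInstance : Projective (Q.complex.X n))

lemma extComplex_exact₀ :
    (ShortComplex.mk ((extComplex Q).d 1 0) (Projective.π X)
      (by erw [extComplex_d_one_zero, Category.assoc, kernel.condition, comp_zero])).Exact := by
  let S₂ : ShortComplex C := ShortComplex.mk (kernel.ι (Projective.π X)) (Projective.π X)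
    (kernel.condition _)
  let α : ShortComplex.mk ((extComplex Q).d 1 0) (Projective.π X)
      (by erw [extComplex_d_one_zero, Category.assoc, kernel.condition, comp_zero]) ⟶ S₂ :=
    { τ₁ := Q.π.f 0
      τ₂ := 𝟙 _
      τ₃ := 𝟙 _
      comm₁₂ := by
        dsimp [S₂]
        erw [extComplex_d_one_zero, Category.comp_id]
        rfl
      comm₂₃ := by dsimp [S₂]; erw [Category.id_comp, Category.comp_id] }
  have : Epi α.τ₁ := by dsimp [α]; exact (inferInstance : Epi (Q.π.f 0))
  have : IsIso α.τ₂ := by dsimp [α]; exact (inferInstance : IsIso (𝟙 ((extComplex Q).X 0)))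
  have : Mono α.τ₃ := by dsimp [α]; infer_instance
  rw [ShortComplex.exact_iff_of_epi_of_isIso_of_mono α]
  exact ShortComplex.exact_of_f_is_kernel _ (kernelIsKernel _)

lemma extComplex_exactAt_succ (n : ℕ) :
    (extComplex Q).ExactAt (n + 1) := by
  rw [HomologicalComplex.exactAt_iff' _ (n + 2) (n + 1) n (by simp) (by simp)]
  cases n with
  | zero =>
      -- exactness of `Q₁ ⟶ Q₀ ⟶ P`
      let S₁ : ShortComplex C := ShortComplex.mk (Q.complex.d 1 0) (Q.π.f 0) Q.complex_d_comp_π_f_zero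
      let S₂ : ShortComplex C := ShortComplex.mk ((extComplex Q).d 2 1) ((extComplex Q).d 1 0)
        ((extComplex Q).d_comp_d _ _ _)
      have h₁ : S₁.Exact := Q.exact₀
      let α : S₁ ⟶ S₂ :=
        { τ₁ := (𝟙 (Q.complex.X 1) : S₁.X₁ ⟶ S₂.X₁)
          τ₂ := 𝟙 _
          τ₃ := kernel.ι (Projective.π X)
          comm₁₂ := by
            show 𝟙 _ ≫ (extComplex Q).d 2 1 = Q.complex.d 1 0 ≫ 𝟙 _
            rw [Category.id_comp, Category.comp_id, extComplex_d_succ]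
          comm₂₃ := by
            show 𝟙 _ ≫ (extComplex Q).d 1 0 = Q.π.f 0 ≫ kernel.ι (Projective.π X)
            rw [Category.id_comp, extComplex_d_one_zero] }
      have : Epi α.τ₁ := by dsimp [α]; exact (inferInstance : Epi (𝟙 (Q.complex.X 1)))
      have : IsIso α.τ₂ := by dsimp [α]; exact (inferInstance : IsIso (𝟙 S₁.X₂))
      have : Mono α.τ₃ := by dsimp [α]; exact (inferInstance : Mono (kernel.ι (Projective.π X)))
      exact ((ShortComplex.exact_iff_of_epi_of_isIso_of_mono α).1 h₁ :)
  | succ n =>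
      have h := Q.exact_succ n
      let e : ShortComplex.mk _ _ (Q.complex.d_comp_d (n + 2) (n + 1) n) ≅
          ShortComplex.mk ((extComplex Q).d (n + 3) (n + 2)) ((extComplex Q).d (n + 2) (n + 1))
            ((extComplex Q).d_comp_d _ _ _) :=
        ShortComplex.isoMk (Iso.refl _) (Iso.refl _) (Iso.refl _)
          (by dsimp; erw [extComplex_d_succ, Category.id_comp, Category.comp_id])
          (by dsimp; erw [extComplex_d_succ, Category.id_comp, Category.comp_id])
      exact (ShortComplex.exact_iff_of_iso e).1 h

/-- The spliced complex is a projective resolution of `X`. -/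
def extResolution : ProjectiveResolution X where
  complex := extComplex Q
  π := (ChainComplex.toSingle₀Equiv _ _).symm ⟨Projective.π X, by
        erw [extComplex_d_one_zero, Category.assoc, kernel.condition, comp_zero]⟩
  quasiIso := ⟨fun n => by
    cases n with
    | zero =>
        rw [ChainComplex.quasiIsoAt₀_iff, ShortComplex.quasiIso_iff_of_zeros']
        · refine (ShortComplex.exact_and_epi_g_iff_of_iso ?_).2
            ⟨extComplex_exact₀ Q, by dsimp; exact (inferInstance : Epi (Projective.π X))⟩
          exact ShortComplex.isoMk (Iso.refl _) (Iso.refl _) (Iso.refl _)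
            (by erw [Category.id_comp, Category.comp_id]; rfl) (by simp [ChainComplex.toSingle₀Equiv]; erw [Category.id_comp, Category.comp_id, HomologicalComplex.mkHomToSingle_f, ChainComplex.single₀ObjXSelf]; simp; exact (Category.comp_id _).symm)
        all_goals rfl
    | succ n =>
        rw [quasiIsoAt_iff_exactAt']
        · exact extComplex_exactAt_succ Q n
        · apply ChainComplex.exactAt_succ_single_obj⟩

variable {D : Type u'} [Category.{v'} D] [Abelian D]

/-- Dimension shifting: `L_{n+2} F X ≅ L_{n+1} F (syz X)`. -/
def shiftIso (F : C ⥤ D) [F.Additive] (n : ℕ) (X : C) :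
    (F.leftDerived (n + 2)).obj X ≅ (F.leftDerived (n + 1)).obj (syz X) := by
  let Q : ProjectiveResolution (syz X) := ProjectiveResolution.of _
  let FR := (F.mapHomologicalComplex (ComplexShape.down ℕ)).obj (extComplex Q)
  let FQ := (F.mapHomologicalComplex (ComplexShape.down ℕ)).obj Q.complex
  let e : FR.sc' (n + 3) (n + 2) (n + 1) ≅ FQ.sc' (n + 2) (n + 1) n :=
    ShortComplex.isoMk (Iso.refl _) (Iso.refl _) (Iso.refl _)
      (by
        dsimp [FR, FQ]
        erw [Category.id_comp, Category.comp_id]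
        exact congrArg F.map (extComplex_d_succ Q (n + 1)).symm)
      (by
        dsimp [FR, FQ]
        erw [Category.id_comp, Category.comp_id]
        exact congrArg F.map (extComplex_d_succ Q n).symm)
  exact ((extResolution Q).isoLeftDerivedObj F (n + 2)) ≪≫
    FR.homologyIsoSc' (n + 3) (n + 2) (n + 1) (by simp) (by simp) ≪≫
    ShortComplex.homologyMapIso e ≪≫
    (FQ.homologyIsoSc' (n + 2) (n + 1) n (by simp) (by simp)).symm ≪≫
    (Q.isoLeftDerivedObj F (n + 1)).symm

end Statement3Aux

end Statement3Aux

/-- Let `A` be an abelian category with enough projectives and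
`F : A ⥤ B` a right exact additive functor to an abelian category `B`.  If the first
left derived functor `L¹F` is left exact, then `LⁱF = 0` for all `i ≥ 2`. -/
theorem statement3 {A : Type u} [Category.{v} A] [Abelian A] [EnoughProjectives A]
    {B : Type u'} [Category.{v'} B] [Abelian B]
    (F : A ⥤ B) [F.Additive] [PreservesFiniteColimits F]
    (h1 : PreservesFiniteLimits (F.leftDerived 1)) :
    ∀ i : ℕ, 2 ≤ i → ∀ X : A, IsZero ((F.leftDerived i).obj X) := by
  haveI := h1
  -- `L¹F` vanishes on syzygies, since it preserves monos and vanishes on projectives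
  have key : ∀ X : A, IsZero ((F.leftDerived 1).obj (Statement3Aux.syz X)) := by
    intro X
    haveI : Mono ((F.leftDerived 1).map (kernel.ι (Projective.π X))) :=
      preserves_mono_of_preservesLimit (F.leftDerived 1) _
    exact IsZero.of_mono ((F.leftDerived 1).map (kernel.ι (Projective.π X)))
      (F.isZero_leftDerived_obj_projective_succ 0 (Projective.over X))
  have main : ∀ k : ℕ, ∀ X : A, IsZero ((F.leftDerived (k + 2)).obj X) := by
    intro k
    induction k with
    | zero =>
        intro X
        exact (key X).of_iso (Statement3Aux.shiftIso F 0 X)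
    | succ k ih =>
        intro X
        exact (ih (Statement3Aux.syz X)).of_iso (Statement3Aux.shiftIso F (k + 1) X)
  intro i hi X
  obtain ⟨k, rfl⟩ : ∃ k, i = k + 2 := ⟨i - 2, by omega⟩
  exact main k X
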